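/- For every real x ≥ 0, log(1+x) ≤ (x/2)·(x+6)/(2x+3). -/

import Mathlib

/-- For every real `x ≥ 0`, `log (1+x) ≤ (x/2) * (x+6)/(2x+3)`. -/
theorem log_le_half_mul_div (x : ℝ) (hx : 0 ≤ x) :
    Real.log (1 + x) ≤ (x / 2) * ((x + 6) / (2 * x + 3)) := by
  set f : ℝ → ℝ := fun t => t / 2 * ((t + 6) / (2 * t + 3)) - Real.log (1 + t) with hf
  have hder : ∀ t : ℝ, 0 ≤ t →
      HasDerivAt f ((t ^ 2 + 3 * t + 9) / (2 * t + 3) ^ 2 - 1 / (1 + t)) t := by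
    intro t ht
    have h1 : (1 : ℝ) + t ≠ 0 := by linarith
    have h2 : (2 : ℝ) * t + 3 ≠ 0 := by linarith
    have hlog : HasDerivAt (fun t : ℝ => Real.log (1 + t)) (1 / (1 + t)) t := by
      have := (Real.hasDerivAt_log h1).comp t ((hasDerivAt_id t).const_add 1)
      simpa [one_div, Function.comp_def] using this
    have h₁ : HasDerivAt (fun t : ℝ => t / 2) (1 / 2) t := by
      simpa using (hasDerivAt_id t).div_const 2
    have h₂ : HasDerivAt (fun t : ℝ => (t + 6) / (2 * t + 3))
        ((1 * (2 * t + 3) - (t + 6) * 2) / (2 * t + 3) ^ 2) t := by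
      exact ((hasDerivAt_id t).add_const 6).div
        (by simpa using ((hasDerivAt_id t).const_mul 2).add_const 3) h2
    have hq := h₁.mul h₂
    have hq' : HasDerivAt (fun t : ℝ => t / 2 * ((t + 6) / (2 * t + 3)))
        ((t ^ 2 + 3 * t + 9) / (2 * t + 3) ^ 2) t := by
      refine HasDerivAt.congr_deriv hq ?_
      field_simp
      ring
    exact hq'.sub hlog
  have hmono : MonotoneOn f (Set.Ici (0 : ℝ)) := by
    apply monotoneOn_of_deriv_nonneg (convex_Ici 0)
    · exact fun t ht => (hder t ht).continuousAt.continuousWithinAt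
    · intro t ht
      rw [interior_Ici] at ht
      exact (hder t (le_of_lt ht)).differentiableAt.differentiableWithinAt
    · intro t ht
      rw [interior_Ici] at ht
      have ht' : (0 : ℝ) ≤ t := le_of_lt ht
      rw [(hder t ht').deriv]
      have h1 : (0 : ℝ) < 1 + t := by linarith
      have h2 : (0 : ℝ) < (2 * t + 3) ^ 2 := by positivity
      rw [sub_nonneg, div_le_div_iff₀ h1 h2]
      nlinarith [pow_nonneg ht' 3]
  have h0 : f 0 = 0 := by simp [hf]
  have hfx : f 0 ≤ f x := hmono (Set.self_mem_Ici) hx hx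
  rw [h0, hf] at hfx
  linarith [hfx]
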